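/- The Dynkin–Specht–Wever theorem: if P is a homogeneous Lie polynomial of degree n in the free Lie algebra over ℚ (viewed inside the free associative algebra), and r is the linear map sending each word a₁a₂⋯aₙ to the right-nested bracket [a₁,[a₂,...,[a_{n-1},aₙ]...]], then r(P) = n·P. -/

import Mathlib

/-- Right-to-left Lie bracketing of a word: `[a₁,[a₂,...,[a_{n-1},aₙ]...]]`, computed in the
free associative algebra with the commutator bracket `[a,b] = ab - ba`. -/
noncomputable def rightBracket {k : ℕ} : List (Fin k) → FreeAlgebra ℚ (Fin k)
  | [] => 0
  | [a] => FreeAlgebra.ι ℚ a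
  | a :: l => ⁅FreeAlgebra.ι ℚ a, rightBracket l⁆

/-- The unique linear map on the free associative algebra sending each word
`a₁a₂⋯aₙ` to its right-nested bracketing `[a₁,[a₂,...,[a_{n-1},aₙ]...]]`. -/
noncomputable def rMap (k : ℕ) : FreeAlgebra ℚ (Fin k) →ₗ[ℚ] FreeAlgebra ℚ (Fin k) :=
  (FreeAlgebra.basisFreeMonoid ℚ (Fin k)).constr ℚ fun w => rightBracket (FreeMonoid.toList w)

attribute [local instance 100] LieRing.ofAssociativeRing

namespace DSW

variable {k : ℕ}

/-- The "word" associated to a list of letters. -/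
noncomputable abbrev word (l : List (Fin k)) : FreeAlgebra ℚ (Fin k) :=
  (l.map (FreeAlgebra.ι ℚ)).prod

lemma equiv_word (l : List (Fin k)) :
    FreeAlgebra.equivMonoidAlgebraFreeMonoid (word l)
      = MonoidAlgebra.single (FreeMonoid.ofList l) 1 := by
  induction l with
  | nil =>
      simp [word, MonoidAlgebra.one_def]
  | cons a l ih =>
      have ha : FreeAlgebra.equivMonoidAlgebraFreeMonoid (FreeAlgebra.ι ℚ a)
          = MonoidAlgebra.single (FreeMonoid.of a) 1 := by
        simp [FreeAlgebra.equivMonoidAlgebraFreeMonoid, MonoidAlgebra.of_apply]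
      simp only [word, List.map_cons, List.prod_cons, map_mul, ih, ha,
        MonoidAlgebra.single_mul_single, one_mul]
      rfl

lemma basis_apply (w : FreeMonoid (Fin k)) :
    FreeAlgebra.basisFreeMonoid ℚ (Fin k) w = word (FreeMonoid.toList w) := by
  apply FreeAlgebra.equivMonoidAlgebraFreeMonoid.injective
  rw [equiv_word]
  have : FreeAlgebra.basisFreeMonoid ℚ (Fin k) w
      = FreeAlgebra.equivMonoidAlgebraFreeMonoid.symm.toLinearEquiv (MonoidAlgebra.single w 1) := by
    rw [FreeAlgebra.basisFreeMonoid, Module.Basis.map_apply, Finsupp.coe_basisSingleOne]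
    rfl
  rw [this]
  simp only [AlgEquiv.toLinearEquiv_apply, AlgEquiv.apply_symm_apply]
  rfl

lemma rMap_word (l : List (Fin k)) : rMap k (word l) = rightBracket l := by
  have := (FreeAlgebra.basisFreeMonoid ℚ (Fin k)).constr_basis ℚ
    (fun w => rightBracket (FreeMonoid.toList w)) (FreeMonoid.ofList l)
  rw [basis_apply] at this
  exact this

/-- The span of words of length `m`. -/
noncomputable def W (k m : ℕ) : Submodule ℚ (FreeAlgebra ℚ (Fin k)) :=
  Submodule.span ℚ
    {x : FreeAlgebra ℚ (Fin k) | ∃ l : List (Fin k), l.length = m ∧ x = word l}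

/-- The span of nonempty words. -/
noncomputable def Wpos (k : ℕ) : Submodule ℚ (FreeAlgebra ℚ (Fin k)) :=
  Submodule.span ℚ {x : FreeAlgebra ℚ (Fin k) | ∃ l : List (Fin k), l ≠ [] ∧ x = word l}

lemma word_mul (l m : List (Fin k)) : word l * word m = word (l ++ m) := by
  simp [word]

lemma mul_mem_W {p q : ℕ} {x y : FreeAlgebra ℚ (Fin k)} (hx : x ∈ W k p) (hy : y ∈ W k q) :
    x * y ∈ W k (p + q) := by
  have h := Submodule.mul_mem_mul hx hy
  rw [W, W, Submodule.span_mul_span] at h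
  refine Submodule.span_le.2 ?_ h
  rintro z hz
  rw [Set.mem_mul] at hz
  obtain ⟨a, ⟨l, hl, rfl⟩, b, ⟨m, hm, rfl⟩, rfl⟩ := hz
  exact Submodule.subset_span ⟨l ++ m, by simp [hl, hm], (word_mul l m)⟩

lemma mul_mem_Wpos {x y : FreeAlgebra ℚ (Fin k)} (hx : x ∈ Wpos k) (hy : y ∈ Wpos k) :
    x * y ∈ Wpos k := by
  have h := Submodule.mul_mem_mul hx hy
  rw [Wpos, Submodule.span_mul_span] at h
  refine Submodule.span_le.2 ?_ h
  rintro z hz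
  rw [Set.mem_mul] at hz
  obtain ⟨a, ⟨l, hl, rfl⟩, b, ⟨m, hm, rfl⟩, rfl⟩ := hz
  exact Submodule.subset_span ⟨l ++ m, by simp [hl], (word_mul l m)⟩

lemma rightBracket_cons (a : Fin k) {l : List (Fin k)} (hl : l ≠ []) :
    rightBracket (a :: l) = ⁅FreeAlgebra.ι ℚ a, rightBracket l⁆ := by
  cases l with
  | nil => exact absurd rfl hl
  | cons b m => rfl

/-- Key lemma A: for a Lie element `u` and `w` in the span of nonempty words,
`r (u * w) = ⁅u, r w⁆`. We prove it jointly with `u ∈ Wpos`. -/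
lemma lemmaA {u : FreeAlgebra ℚ (Fin k)}
    (hu : u ∈ LieSubalgebra.lieSpan ℚ (FreeAlgebra ℚ (Fin k))
      (Set.range (FreeAlgebra.ι ℚ))) :
    u ∈ Wpos k ∧ ∀ w ∈ Wpos k, rMap k (u * w) = ⁅u, rMap k w⁆ := by
  refine LieSubalgebra.lieSpan_induction (R := ℚ)
    (p := fun u _ => u ∈ Wpos k ∧ ∀ w ∈ Wpos k, rMap k (u * w) = ⁅u, rMap k w⁆)
    ?refine_1 ?refine_2 ?refine_4 ?refine_3 ?refine_5 hu
  case refine_1 =>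
      rintro x hx
      obtain ⟨i, rfl⟩ := hx
      constructor
      · exact Submodule.subset_span ⟨[i], by simp, by simp [word]⟩
      · intro w hw
        induction hw using Submodule.span_induction with
        | mem z hz =>
            obtain ⟨l, hl, rfl⟩ := hz
            have h1 : FreeAlgebra.ι ℚ i * word l = word (i :: l) := by simp [word]
            rw [h1, rMap_word, rMap_word, rightBracket_cons i hl]
        | zero => simp
        | add a b _ _ ha hb => rw [mul_add, map_add, ha, hb, map_add, lie_add]
        | smul c a _ ha =>
            rw [mul_smul_comm, map_smul, ha, map_smul, lie_smul]
  case refine_2 =>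
      exact ⟨Submodule.zero_mem _, fun w _ => by simp⟩
  case refine_3 =>
      rintro c x _ ⟨hx1, hx2⟩
      refine ⟨Submodule.smul_mem _ c hx1, fun w hw => ?_⟩
      rw [smul_mul_assoc, map_smul, hx2 w hw, smul_lie]
  case refine_4 =>
      rintro x y _ _ ⟨hx1, hx2⟩ ⟨hy1, hy2⟩
      refine ⟨Submodule.add_mem _ hx1 hy1, fun w hw => ?_⟩
      rw [add_mul, map_add, hx2 w hw, hy2 w hw, add_lie]
  case refine_5 =>
      rintro x y _ _ ⟨hx1, hx2⟩ ⟨hy1, hy2⟩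
      refine ⟨?_, fun w hw => ?_⟩
      · have : ⁅x, y⁆ = x * y - y * x := Ring.lie_def x y
        rw [this]
        exact Submodule.sub_mem _ (mul_mem_Wpos hx1 hy1) (mul_mem_Wpos hy1 hx1)
      · have h1 : ⁅x, y⁆ * w = x * (y * w) - y * (x * w) := by
          rw [Ring.lie_def, sub_mul, mul_assoc, mul_assoc]
        rw [h1, map_sub, hx2 _ (mul_mem_Wpos hy1 hw), hy2 _ (mul_mem_Wpos hx1 hw),
          hy2 w hw, hx2 w hw, lie_lie]

/-- Lie monomials of degree `m`. -/
inductive IsLieMon : ℕ → FreeAlgebra ℚ (Fin k) → Prop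
  | base (i : Fin k) : IsLieMon 1 (FreeAlgebra.ι ℚ i)
  | lie {p q : ℕ} {x y : FreeAlgebra ℚ (Fin k)} :
      IsLieMon p x → IsLieMon q y → IsLieMon (p + q) ⁅x, y⁆

lemma IsLieMon.mem_W {m : ℕ} {x : FreeAlgebra ℚ (Fin k)} (h : IsLieMon m x) : x ∈ W k m := by
  induction h with
  | base i => exact Submodule.subset_span ⟨[i], by simp, by simp [word]⟩
  | lie hx hy ihx ihy =>
      rw [Ring.lie_def]
      refine Submodule.sub_mem _ (mul_mem_W ihx ihy) ?_
      rw [Nat.add_comm]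
      exact mul_mem_W ihy ihx

lemma IsLieMon.pos {m : ℕ} {x : FreeAlgebra ℚ (Fin k)} (h : IsLieMon m x) : 1 ≤ m := by
  induction h with
  | base i => exact le_refl 1
  | lie hx hy ihx ihy => omega

lemma W_le_Wpos {m : ℕ} (hm : 1 ≤ m) : W k m ≤ Wpos k := by
  refine Submodule.span_le.2 ?_
  rintro x ⟨l, hl, rfl⟩
  exact Submodule.subset_span ⟨l, by rintro rfl; simp at hl; omega, rfl⟩

lemma IsLieMon.mem_lieSpan {m : ℕ} {x : FreeAlgebra ℚ (Fin k)} (h : IsLieMon m x) :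
    x ∈ LieSubalgebra.lieSpan ℚ (FreeAlgebra ℚ (Fin k)) (Set.range (FreeAlgebra.ι ℚ)) := by
  induction h with
  | base i => exact LieSubalgebra.subset_lieSpan ⟨i, rfl⟩
  | lie hx hy ihx ihy => exact LieSubalgebra.lie_mem _ ihx ihy

/-- Key lemma D: `r` multiplies a Lie monomial of degree `m` by `m`. -/
lemma IsLieMon.rMap_eq {m : ℕ} {x : FreeAlgebra ℚ (Fin k)} (h : IsLieMon m x) :
    rMap k x = (m : ℚ) • x := by
  induction h with
  | base i =>
      have : FreeAlgebra.ι ℚ i = word [i] := by simp [word]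
      rw [this, rMap_word]
      simp [rightBracket, word]
  | lie hx hy ihx ihy =>
      rename_i p q x y
      have hxw : x ∈ Wpos k := W_le_Wpos hx.pos hx.mem_W
      have hyw : y ∈ Wpos k := W_le_Wpos hy.pos hy.mem_W
      have h1 : rMap k ⁅x, y⁆ = ⁅x, rMap k y⁆ - ⁅y, rMap k x⁆ := by
        rw [Ring.lie_def, map_sub, (lemmaA hx.mem_lieSpan).2 y hyw,
          (lemmaA hy.mem_lieSpan).2 x hxw]
      rw [h1, ihx, ihy, lie_smul, lie_smul, ← lie_skew y x, smul_neg, sub_neg_eq_add,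
        Nat.cast_add, add_smul]
      rw [add_comm]

/-- The projection onto the degree-`n` component. -/
noncomputable def proj (k n : ℕ) : FreeAlgebra ℚ (Fin k) →ₗ[ℚ] FreeAlgebra ℚ (Fin k) :=
  (FreeAlgebra.basisFreeMonoid ℚ (Fin k)).constr ℚ fun w =>
    if (FreeMonoid.toList w).length = n then FreeAlgebra.basisFreeMonoid ℚ (Fin k) w else 0

lemma proj_word {n : ℕ} (l : List (Fin k)) :
    proj k n (word l) = if l.length = n then word l else 0 := by
  have := (FreeAlgebra.basisFreeMonoid ℚ (Fin k)).constr_basis ℚ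
    (fun w => if (FreeMonoid.toList w).length = n then
      FreeAlgebra.basisFreeMonoid ℚ (Fin k) w else 0) (FreeMonoid.ofList l)
  rw [basis_apply] at this
  rw [proj]
  exact this

lemma proj_of_mem_W {n m : ℕ} {x : FreeAlgebra ℚ (Fin k)} (hx : x ∈ W k m) :
    proj k n x = if m = n then x else 0 := by
  induction hx using Submodule.span_induction with
  | mem z hz => obtain ⟨l, rfl, rfl⟩ := hz; exact proj_word l
  | zero => simp
  | add a b _ _ ha hb => rw [map_add, ha, hb]; split <;> simp
  | smul c a _ ha => rw [map_smul, ha]; split <;> simp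

/-- The span of Lie monomials (of arbitrary degree). -/
noncomputable def M (k : ℕ) : Submodule ℚ (FreeAlgebra ℚ (Fin k)) :=
  Submodule.span ℚ {x : FreeAlgebra ℚ (Fin k) | ∃ m, IsLieMon m x}

lemma lie_mem_M {x y : FreeAlgebra ℚ (Fin k)} (hx : x ∈ M k) (hy : y ∈ M k) :
    ⁅x, y⁆ ∈ M k := by
  induction hx using Submodule.span_induction with
  | mem a ha =>
      induction hy using Submodule.span_induction with
      | mem b hb =>
          obtain ⟨p, hp⟩ := ha; obtain ⟨q, hq⟩ := hb
          exact Submodule.subset_span ⟨p + q, hp.lie hq⟩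
      | zero => simp [M]
      | add b c _ _ hb hc => rw [lie_add]; exact Submodule.add_mem _ hb hc
      | smul r b _ hb => rw [lie_smul]; exact Submodule.smul_mem _ r hb
  | zero => simp [M]
  | add a b _ _ ha hb => rw [add_lie]; exact Submodule.add_mem _ ha hb
  | smul r a _ ha => rw [smul_lie]; exact Submodule.smul_mem _ r ha

lemma lieSpan_le_M {x : FreeAlgebra ℚ (Fin k)}
    (hx : x ∈ LieSubalgebra.lieSpan ℚ (FreeAlgebra ℚ (Fin k))
      (Set.range (FreeAlgebra.ι ℚ))) : x ∈ M k := by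
  refine LieSubalgebra.lieSpan_induction (R := ℚ) (p := fun x _ => x ∈ M k) ?_ ?_ ?_ ?_ ?_ hx
  · rintro a ⟨i, rfl⟩
    exact Submodule.subset_span ⟨1, IsLieMon.base i⟩
  · exact Submodule.zero_mem _
  · exact fun a b _ _ ha hb => Submodule.add_mem _ ha hb
  · exact fun r _ _ ha => Submodule.smul_mem _ r ha
  · exact fun a b _ _ ha hb => lie_mem_M ha hb

lemma proj_mem_Mn {n : ℕ} {x : FreeAlgebra ℚ (Fin k)} (hx : x ∈ M k) :
    proj k n x ∈ Submodule.span ℚ {x : FreeAlgebra ℚ (Fin k) | IsLieMon n x} := by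
  induction hx using Submodule.span_induction with
  | mem a ha =>
      obtain ⟨m, hm⟩ := ha
      rw [proj_of_mem_W hm.mem_W]
      split
      · next h => exact Submodule.subset_span (h ▸ hm)
      · exact Submodule.zero_mem _
  | zero => simp
  | add a b _ _ ha hb => rw [map_add]; exact Submodule.add_mem _ ha hb
  | smul r a _ ha => rw [map_smul]; exact Submodule.smul_mem _ r ha

end DSW

theorem dynkin_specht_wever (k n : ℕ) (P : FreeAlgebra ℚ (Fin k))
    (hLie : P ∈ LieSubalgebra.lieSpan ℚ (FreeAlgebra ℚ (Fin k))
      (Set.range (FreeAlgebra.ι ℚ)))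
    (hHomog : P ∈ Submodule.span ℚ
      {x : FreeAlgebra ℚ (Fin k) | ∃ l : List (Fin k), l.length = n ∧
        x = (l.map (FreeAlgebra.ι ℚ)).prod}) :
    rMap k P = (n : ℚ) • P := by
  have hW : P ∈ DSW.W k n := hHomog
  have hM : P ∈ DSW.M k := DSW.lieSpan_le_M hLie
  have hproj : DSW.proj k n P = P := by
    rw [DSW.proj_of_mem_W hW]
    simp
  have hPn : P ∈ Submodule.span ℚ {x : FreeAlgebra ℚ (Fin k) | DSW.IsLieMon n x} := by
    rw [← hproj]
    exact DSW.proj_mem_Mn hM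
  clear hLie hHomog hW hM hproj
  induction hPn using Submodule.span_induction with
  | mem a ha => exact ha.rMap_eq
  | zero => simp
  | add a b _ _ ha hb => rw [map_add, ha, hb, smul_add]
  | smul r a _ ha => rw [map_smul, ha, smul_comm]
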